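/- (Proposition 3) Let a, b, c > 0 and consider a connecting cycle for three concentric circles with radii a, b, c: vertices p_1, p_2, p_3 with p_i at distance a, b, c respectively from the origin O, given by angles α_1, α_2, α_3. Suppose all three partial derivatives ∂L/∂α_j of the perimeter vanish (a Fermat triangle), the three vertices are pairwise distinct, and O lies in the interior of the triangle p_1 p_2 p_3. Then the common distance r from O to the three side lines (the inradius of the Fermat triangle) satisfies 2 a b c r³ + (a² b² + b² c² + c² a²) r² − a² b² c² = 0. -/

import Mathlib

set_option maxHeartbeats 2000000

open Real

/-- The point with polar radius `ρ` and polar angle `θ` in the Euclidean plane. -/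
noncomputable def pt (ρ θ : ℝ) : EuclideanSpace ℝ (Fin 2) :=
  WithLp.toLp 2 ![ρ * Real.cos θ, ρ * Real.sin θ]

/-- The perimeter of the connecting cycle for three concentric circles of radii `a, b, c`
with vertices at polar angles `α, β, γ`. -/
noncomputable def triPerim (a b c : ℝ) (α β γ : ℝ) : ℝ :=
  dist (pt a α) (pt b β) + dist (pt b β) (pt c γ) + dist (pt c γ) (pt a α)

local notation "E2" => EuclideanSpace ℝ (Fin 2)

lemma pt_apply0 (ρ θ : ℝ) : pt ρ θ 0 = ρ * Real.cos θ := rfl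
lemma pt_apply1 (ρ θ : ℝ) : pt ρ θ 1 = ρ * Real.sin θ := rfl

lemma dist_coord (x y : E2) :
    dist x y = Real.sqrt ((x 0 - y 0)^2 + (x 1 - y 1)^2) := by
  rw [EuclideanSpace.dist_eq, Fin.sum_univ_two]
  simp [Real.dist_eq, sq_abs]

lemma dist_pt (ρ θ σ φ : ℝ) :
    dist (pt ρ θ) (pt σ φ) = Real.sqrt (ρ^2 + σ^2 - 2*ρ*σ*Real.cos (θ - φ)) := by
  rw [dist_coord, pt_apply0, pt_apply1, pt_apply0, pt_apply1, Real.cos_sub]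
  congr 1
  have h1 := sin_sq_add_cos_sq θ
  have h2 := sin_sq_add_cos_sq φ
  nlinarith [h1, h2]

lemma norm_pt (ρ θ : ℝ) (hρ : 0 ≤ ρ) : ‖pt ρ θ‖ = ρ := by
  have : ‖pt ρ θ‖ = dist (pt ρ θ) (pt 0 θ) := by
    rw [dist_coord]
    simp [pt_apply0, pt_apply1, EuclideanSpace.norm_eq, Fin.sum_univ_two, sq_abs]
  rw [this, dist_pt]
  rw [show ρ^2 + 0^2 - 2*ρ*0*Real.cos (θ - θ) = ρ^2 by ring, Real.sqrt_sq hρ]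

lemma cross_pt (ρ θ σ φ : ℝ) :
    pt ρ θ 0 * pt σ φ 1 - pt ρ θ 1 * pt σ φ 0 = ρ * σ * Real.sin (φ - θ) := by
  rw [pt_apply0, pt_apply1, pt_apply0, pt_apply1, Real.sin_sub]
  ring

lemma hasDerivAt_dist_pt (ρ σ θ φ : ℝ) (h : pt ρ θ ≠ pt σ φ) :
    HasDerivAt (fun t => dist (pt ρ t) (pt σ φ))
      (ρ*σ*Real.sin (θ - φ) / dist (pt ρ θ) (pt σ φ)) θ := by
  have hd : dist (pt ρ θ) (pt σ φ) ≠ 0 := dist_ne_zero.2 h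
  have hg : (ρ^2 + σ^2 - 2*ρ*σ*Real.cos (θ - φ)) ≠ 0 := by
    intro h0
    apply hd
    rw [dist_pt, h0, Real.sqrt_zero]
  have h1 : HasDerivAt (fun t : ℝ => t - φ) 1 θ := (hasDerivAt_id θ).sub_const φ
  have h2 : HasDerivAt (fun t : ℝ => Real.cos (t - φ)) (-Real.sin (θ - φ) * 1) θ := h1.cos
  have h3 : HasDerivAt (fun t : ℝ => ρ^2 + σ^2 - 2*ρ*σ*Real.cos (t - φ))
      (-(2*ρ*σ*(-Real.sin (θ - φ) * 1))) θ := (h2.const_mul (2*ρ*σ)).const_sub (ρ^2+σ^2)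
  have h4 := h3.sqrt hg
  have : (fun t => dist (pt ρ t) (pt σ φ))
      = fun t => Real.sqrt (ρ^2 + σ^2 - 2*ρ*σ*Real.cos (t - φ)) := by
    funext t; exact dist_pt ρ t σ φ
  rw [this, dist_pt]
  convert h4 using 1
  rw [show -(2*ρ*σ*(-Real.sin (θ - φ) * 1)) = 2*(ρ*σ*Real.sin (θ - φ)) by ring]
  rw [mul_div_mul_left _ _ (two_ne_zero)]

lemma mem_line_iff (p q x : E2) :
    x ∈ (affineSpan ℝ {p, q} : Set E2) ↔ ∃ t : ℝ, x = t • (q - p) + p := by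
  constructor
  · intro hx
    have hx' : (x -ᵥ p) +ᵥ p ∈ affineSpan ℝ {p, q} := by rwa [vsub_vadd]
    obtain ⟨t, ht⟩ := ((vadd_left_mem_affineSpan_pair (k:=ℝ) (p₁:=p) (p₂:=q) (v:=x -ᵥ p))).1 hx'
    exact ⟨t, by rw [vsub_eq_sub] at ht; rw [ht]; simp⟩
  · rintro ⟨t, rfl⟩
    rw [show t • (q - p) + p = t • (q-p) +ᵥ p by rfl]
    exact (vadd_left_mem_affineSpan_pair (k:=ℝ) (p₁:=p) (p₂:=q)).2 ⟨t, by simp [vsub_eq_sub]⟩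

lemma infDist_line (p q : E2) (hpq : p ≠ q) :
    Metric.infDist (0 : E2) (affineSpan ℝ {p, q} : Set E2)
      = |p 0 * q 1 - p 1 * q 0| / dist p q := by
  set c : ℝ := p 0 * q 1 - p 1 * q 0 with hc
  have hd0 : (0:ℝ) < dist p q := dist_pos.2 hpq
  have hdsq : dist p q ^ 2 = (p 0 - q 0)^2 + (p 1 - q 1)^2 := by
    rw [dist_coord]
    rw [Real.sq_sqrt (by positivity)]
  have hnorm : ∀ x : E2, dist (0:E2) x = Real.sqrt ((x 0)^2 + (x 1)^2) := by
    intro x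
    rw [dist_coord]
    norm_num
  apply le_antisymm
  · set t0 : ℝ := -(p 0 * (q 0 - p 0) + p 1 * (q 1 - p 1)) / (dist p q ^ 2) with ht0
    set m : E2 := t0 • (q - p) + p with hm
    have hmem : m ∈ (affineSpan ℝ {p, q} : Set E2) := (mem_line_iff p q m).2 ⟨t0, rfl⟩
    refine le_trans (Metric.infDist_le_dist_of_mem hmem) ?_
    rw [hnorm m]
    have hm0 : m 0 = t0 * (q 0 - p 0) + p 0 := by simp [hm]
    have hm1 : m 1 = t0 * (q 1 - p 1) + p 1 := by simp [hm]
    have key : (m 0)^2 + (m 1)^2 = c^2 / dist p q ^ 2 := by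
      rw [hm0, hm1, ht0]
      field_simp
      rw [hdsq]; ring
    rw [key, show c^2 / dist p q ^2 = (|c|/dist p q)^2 by
      rw [div_pow, sq_abs], Real.sqrt_sq (by positivity)]
  · rw [← not_lt]
    intro hlt
    obtain ⟨x, hxmem, hxlt⟩ := (Metric.infDist_lt_iff
      ⟨p, (mem_line_iff p q p).2 ⟨0, by simp⟩⟩).1 hlt
    obtain ⟨t, rfl⟩ := (mem_line_iff p q x).1 hxmem
    set x := t • (q - p) + p with hx
    have hx0 : x 0 = t * (q 0 - p 0) + p 0 := by simp [hx]
    have hx1 : x 1 = t * (q 1 - p 1) + p 1 := by simp [hx]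
    rw [hnorm x] at hxlt
    have hle : |c| / dist p q ≤ Real.sqrt ((x 0)^2 + (x 1)^2) := by
      rw [show |c| / dist p q = Real.sqrt (c^2 / dist p q ^2) by
        rw [show c^2/dist p q^2 = (|c|/dist p q)^2 by rw [div_pow, sq_abs],
          Real.sqrt_sq (by positivity)]]
      apply Real.sqrt_le_sqrt
      rw [div_le_iff₀ (by positivity), hdsq, hx0, hx1, hc]
      nlinarith [sq_nonneg ((t*(q 0 - p 0)+p 0)*(q 0 - p 0) + (t*(q 1 - p 1)+p 1)*(q 1 - p 1))]
    linarith

lemma not_mem_interior_hull (p1 p2 p3 w : E2) (hw : ¬ (w 0 = 0 ∧ w 1 = 0)) (k : ℝ)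
    (h1 : p1 0 * w 1 - p1 1 * w 0 = k)
    (h2 : p2 0 * w 1 - p2 1 * w 0 = k)
    (h3 : p3 0 * w 1 - p3 1 * w 0 = k) :
    (0 : E2) ∉ interior (convexHull ℝ ({p1, p2, p3} : Set E2)) := by
  intro h0
  set H : Set E2 := {x | x 0 * w 1 - x 1 * w 0 = k} with hH
  have hconv : Convex ℝ H := by
    intro x hx y hy τ σ hτ hσ hτσ
    simp only [hH, Set.mem_setOf_eq] at hx hy ⊢
    have e0 : (τ • x + σ • y) 0 = τ * x 0 + σ * y 0 := rfl
    have e1 : (τ • x + σ • y) 1 = τ * x 1 + σ * y 1 := rfl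
    rw [e0, e1]
    linear_combination τ * hx + σ * hy + k * hτσ
  have hsub : convexHull ℝ ({p1, p2, p3} : Set E2) ⊆ H := by
    apply convexHull_min _ hconv
    intro x hx
    rcases hx with rfl | rfl | rfl
    · exact h1
    · exact h2
    · exact h3
  have h0' : (0 : E2) ∈ interior H := interior_mono hsub h0
  have hk : k = 0 := by
    have := interior_subset h0'
    simp only [hH, Set.mem_setOf_eq] at this
    have z0 : (0 : E2) 0 = 0 := rfl
    have z1 : (0 : E2) 1 = 0 := rfl
    rw [z0, z1] at this
    linarith
  obtain ⟨ε, hε, hball⟩ := Metric.mem_nhds_iff.1 (mem_interior_iff_mem_nhds.1 h0')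
  have hwpos : 0 < w 0 ^ 2 + w 1 ^ 2 := by
    rcases (not_and_or.1 hw) with h | h
    · positivity
    · positivity
  set W : ℝ := Real.sqrt (w 0 ^ 2 + w 1 ^ 2) with hWdef
  have hW : 0 < W := Real.sqrt_pos.2 hwpos
  have hW2 : W ^ 2 = w 0 ^ 2 + w 1 ^ 2 := Real.sq_sqrt hwpos.le
  set z : E2 := WithLp.toLp 2 ![ε / (2*W) * w 1, -(ε / (2*W) * w 0)] with hz
  have hz0 : z 0 = ε / (2*W) * w 1 := rfl
  have hz1 : z 1 = -(ε / (2*W) * w 0) := rfl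
  have hzmem : z ∈ Metric.ball (0 : E2) ε := by
    rw [Metric.mem_ball, dist_comm]
    have hd : dist (0 : E2) z = Real.sqrt ((z 0)^2 + (z 1)^2) := by
      rw [EuclideanSpace.dist_eq, Fin.sum_univ_two]
      norm_num [Real.dist_eq, sq_abs]
    rw [hd, hz0, hz1]
    have : (ε / (2*W) * w 1)^2 + (-(ε / (2*W) * w 0))^2 = (ε/2)^2 := by
      have expand : (ε / (2*W) * w 1)^2 + (-(ε / (2*W) * w 0))^2
          = (ε / (2*W))^2 * (w 0^2 + w 1^2) := by ring
      rw [expand, ← hW2]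
      field_simp
    rw [this, Real.sqrt_sq (by positivity)]
    linarith
  have hzH := hball hzmem
  simp only [hH, Set.mem_setOf_eq, hk] at hzH
  rw [hz0, hz1] at hzH
  have : ε / (2*W) * (w 1 ^2 + w 0 ^2) = 0 := by linarith [hzH]
  have hpos : 0 < ε / (2*W) * (w 1 ^2 + w 0 ^2) := by
    apply mul_pos (by positivity)
    linarith
  linarith

lemma side_cases (u v s d X : ℝ) (hu : 0 ≤ u) (hv : 0 ≤ v) (hd : 0 < d)
    (hx : (X - s^2 - u*v) * (X - s^2 + u*v) = 0)
    (hdsq : d^2 = u^2 + v^2 + 2*s^2 - 2*X) :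
    (X = s^2 - u*v ∧ d = u + v) ∨ (X = s^2 + u*v ∧ (d = u - v ∨ d = v - u)) := by
  rcases mul_eq_zero.1 hx with h|h
  · right
    refine ⟨by linarith, ?_⟩
    have h2 : (d - (u-v))*(d + (u-v)) = 0 := by nlinarith
    rcases mul_eq_zero.1 h2 with h'|h'
    · left; linarith
    · right; linarith
  · left
    refine ⟨by linarith, ?_⟩
    have h2 : (d - (u+v))*(d + (u+v)) = 0 := by nlinarith
    rcases mul_eq_zero.1 h2 with h'|h'
    · linarith
    · exfalso; linarith

set_option maxHeartbeats 2000000 in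
lemma heron_eq (u v w s d1 d2 d3 X1 X2 X3 : ℝ)
    (hu : 0 ≤ u) (hv : 0 ≤ v) (hw : 0 ≤ w)
    (hd1 : 0 < d1) (hd2 : 0 < d2) (hd3 : 0 < d3)
    (hs : 0 < s^2)
    (hc1 : (X1 = s^2 - u*v ∧ d1 = u + v) ∨ (X1 = s^2 + u*v ∧ (d1 = u - v ∨ d1 = v - u)))
    (hc2 : (X2 = s^2 - v*w ∧ d2 = v + w) ∨ (X2 = s^2 + v*w ∧ (d2 = v - w ∨ d2 = w - v)))
    (hc3 : (X3 = s^2 - w*u ∧ d3 = w + u) ∨ (X3 = s^2 + w*u ∧ (d3 = w - u ∨ d3 = u - w)))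
    (hA : (v^2+s^2)*d3 + d1*X2 + d2*X1 = 0)
    (hB : (w^2+s^2)*d1 + d2*X3 + d3*X2 = 0)
    (hC : (u^2+s^2)*d2 + d3*X1 + d1*X3 = 0) :
    u*v*w = s^2*(u+v+w) ∧ d1 = u+v ∧ d2 = v+w ∧ d3 = w+u := by
  rcases hc1 with ⟨hX1, hD1⟩|⟨hX1, hD1|hD1⟩ <;>
  rcases hc2 with ⟨hX2, hD2⟩|⟨hX2, hD2|hD2⟩ <;>
  rcases hc3 with ⟨hX3, hD3⟩|⟨hX3, hD3|hD3⟩ <;>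
  subst hX1 <;> subst hX2 <;> subst hX3 <;> subst hD1 <;> subst hD2 <;> subst hD3 <;>
  first
    | exact ⟨by linear_combination (-(1:ℝ)/2) * hA, rfl, rfl, rfl⟩
    | (exfalso;
       nlinarith [mul_pos hs hd1, mul_pos hs hd2, mul_pos hs hd3,
         mul_nonneg hs.le hu, mul_nonneg hs.le hv, mul_nonneg hs.le hw,
         mul_nonneg (mul_nonneg hu hv) hw,
         mul_nonneg hu (sq_nonneg v), mul_nonneg hu (sq_nonneg w),
         mul_nonneg hv (sq_nonneg u), mul_nonneg hv (sq_nonneg w),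
         mul_nonneg hw (sq_nonneg u), mul_nonneg hw (sq_nonneg v),
         mul_nonneg hd1.le (mul_nonneg hv hw), mul_nonneg hd2.le (mul_nonneg hu hv),
         mul_nonneg hd2.le (mul_nonneg hw hu), mul_nonneg hd3.le (mul_nonneg hv hw),
         mul_nonneg hd3.le (sq_nonneg v), mul_nonneg hd1.le (sq_nonneg w)])


lemma final_cubic (a b c u v w r d1 d2 d3 : ℝ) (ha : 0 < a) (hb : 0 < b) (hc : 0 < c)
    (hrpos : 0 < r)
    (hu0 : 0 ≤ u) (hv0 : 0 ≤ v) (hw0 : 0 ≤ w)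
    (hd1 : 0 < d1) (hd2 : 0 < d2) (hd3 : 0 < d3)
    (hD1 : d1 = u+v) (hD2 : d2 = v+w) (hD3 : d3 = w+u)
    (hA2 : a^2 = u^2 + r^2) (hB2 : b^2 = v^2 + r^2) (hC2 : c^2 = w^2 + r^2)
    (hHr : u*v*w = r^2*(u+v+w)) :
    2*a*b*c*r^3 + (a^2*b^2 + b^2*c^2 + c^2*a^2)*r^2 - a^2*b^2*c^2 = 0 := by
  subst hD1; subst hD2; subst hD3
  have hr2pos : 0 < r^2 := by positivity
  have hup : 0 < u := by
    rcases eq_or_lt_of_le hu0 with h|h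
    · exfalso
      have h0 : u*v*w = 0 := by rw [← h]; ring
      nlinarith [mul_pos hr2pos hd2, h0, hHr, h, mul_pos hr2pos hr2pos]
    · exact h
  have hvp : 0 < v := by
    rcases eq_or_lt_of_le hv0 with h|h
    · exfalso
      have h0 : u*v*w = 0 := by rw [← h]; ring
      nlinarith [mul_pos hr2pos hd3, h0, hHr, h]
    · exact h
  have hwp : 0 < w := by
    rcases eq_or_lt_of_le hw0 with h|h
    · exfalso
      have h0 : u*v*w = 0 := by rw [← h]; ring
      nlinarith [mul_pos hr2pos hd1, h0, hHr, h]
    · exact h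
  have hsum : 0 < u + v + w := by linarith
  set Q : ℝ := u*v + v*w + w*u - r^2 with hQdef
  have hkey : Q*(u+v+w)
      = u^2*v + u^2*w + u*v^2 + v^2*w + v*w^2 + u*w^2 + 2*(u*v*w) := by
    rw [hQdef]; linear_combination hHr
  have hrhs_pos : (0:ℝ) < u^2*v + u^2*w + u*v^2 + v^2*w + v*w^2 + u*w^2 + 2*(u*v*w) := by
    have h1 : 0 < u^2*v := by positivity
    have h2 : 0 < u^2*w := by positivity
    have h3 : 0 < u*v^2 := by positivity
    have h4 : 0 < v^2*w := by positivity
    have h5 : 0 < v*w^2 := by positivity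
    have h6 : 0 < u*w^2 := by positivity
    have h7 : 0 < u*v*w := by positivity
    linarith
  have hQpos : 0 < Q := by
    rcases lt_or_ge 0 Q with h|h
    · exact h
    · exfalso
      nlinarith [mul_nonneg (neg_nonneg.2 h) hsum.le, hkey, hrhs_pos]
  have habc_sq : (a*b*c)^2 = (r*Q)^2 := by
    rw [hQdef]
    linear_combination (b^2*c^2)*hA2 + ((u^2+r^2)*c^2)*hB2 + ((u^2+r^2)*(v^2+r^2))*hC2
      + (u*v*w - r^2*(u+v+w))*hHr
  have habc : a*b*c = r*Q := by
    have h0 : (a*b*c - r*Q)*(a*b*c + r*Q) = 0 := by linear_combination habc_sq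
    rcases mul_eq_zero.1 h0 with h|h
    · linarith
    · exfalso
      nlinarith [mul_pos (mul_pos ha hb) hc, mul_pos hrpos hQpos]
  rw [hQdef] at habc
  linear_combination (2*r^3)*habc + (-(2*r^2*(u+v+w)))*hHr
    + (-(u*v*w - r^2*(u+v+w)))*hHr
    + ((b^2+c^2)*r^2 - b^2*c^2)*hA2
    + (((u^2+r^2)+c^2)*r^2 - (u^2+r^2)*c^2)*hB2
    + (((u^2+r^2)+(v^2+r^2))*r^2 - (u^2+r^2)*(v^2+r^2))*hC2

/-- Proposition 3: for a Fermat triangle (a critical point of the perimeter)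
for three concentric circles of radii `a, b, c` whose vertices are pairwise distinct and
whose interior contains the common centre `O`, the common distance `r` from `O` to the
three side lines (the inradius) satisfies
`2abc r³ + (a²b² + b²c² + c²a²) r² − a²b²c² = 0`. -/
theorem stmt_14 (a b c : ℝ) (ha : 0 < a) (hb : 0 < b) (hc : 0 < c) (α β γ : ℝ)
    (hcrit1 : HasDerivAt (fun t => triPerim a b c t β γ) 0 α)
    (hcrit2 : HasDerivAt (fun t => triPerim a b c α t γ) 0 β)
    (hcrit3 : HasDerivAt (fun t => triPerim a b c α β t) 0 γ)
    (hne12 : pt a α ≠ pt b β) (hne23 : pt b β ≠ pt c γ) (hne31 : pt c γ ≠ pt a α)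
    (hO : (0 : EuclideanSpace ℝ (Fin 2)) ∈
      interior (convexHull ℝ {pt a α, pt b β, pt c γ})) :
    ∃ r : ℝ,
      Metric.infDist (0 : EuclideanSpace ℝ (Fin 2))
        (affineSpan ℝ {pt a α, pt b β} : Set (EuclideanSpace ℝ (Fin 2))) = r ∧
      Metric.infDist (0 : EuclideanSpace ℝ (Fin 2))
        (affineSpan ℝ {pt b β, pt c γ} : Set (EuclideanSpace ℝ (Fin 2))) = r ∧
      Metric.infDist (0 : EuclideanSpace ℝ (Fin 2))
        (affineSpan ℝ {pt c γ, pt a α} : Set (EuclideanSpace ℝ (Fin 2))) = r ∧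
      2 * a * b * c * r ^ 3 + (a ^ 2 * b ^ 2 + b ^ 2 * c ^ 2 + c ^ 2 * a ^ 2) * r ^ 2 -
        a ^ 2 * b ^ 2 * c ^ 2 = 0 := by
  classical
  set d1 : ℝ := dist (pt a α) (pt b β) with hd1def
  set d2 : ℝ := dist (pt b β) (pt c γ) with hd2def
  set d3 : ℝ := dist (pt c γ) (pt a α) with hd3def
  have hd1pos : 0 < d1 := dist_pos.2 hne12
  have hd2pos : 0 < d2 := dist_pos.2 hne23
  have hd3pos : 0 < d3 := dist_pos.2 hne31
  have hd1ne : d1 ≠ 0 := hd1pos.ne'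
  have hd2ne : d2 ≠ 0 := hd2pos.ne'
  have hd3ne : d3 ≠ 0 := hd3pos.ne'
  -- first criticality equation
  have hE1 : a*b*Real.sin (α-β)/d1 + a*c*Real.sin (α-γ)/d3 = 0 := by
    have h1 := hasDerivAt_dist_pt a b α β hne12
    have h3 := hasDerivAt_dist_pt a c α γ (Ne.symm hne31)
    have htot := (h1.add_const (dist (pt b β) (pt c γ))).add h3
    have hfun : (fun t => triPerim a b c t β γ)
        = fun t => (dist (pt a t) (pt b β) + dist (pt b β) (pt c γ)) + dist (pt a t) (pt c γ) := by
      funext t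
      simp only [triPerim]
      rw [dist_comm (pt c γ) (pt a t)]
    rw [hfun] at hcrit1
    have hu := hcrit1.unique htot
    rw [dist_comm (pt a α) (pt c γ)] at hu
    linarith [hu]
  -- second criticality equation
  have hE2 : b*a*Real.sin (β-α)/d1 + b*c*Real.sin (β-γ)/d2 = 0 := by
    have h1 := hasDerivAt_dist_pt b a β α (Ne.symm hne12)
    have h2 := hasDerivAt_dist_pt b c β γ hne23
    have htot := (h1.add h2).add_const (dist (pt c γ) (pt a α))
    have hfun : (fun t => triPerim a b c α t γ)
        = fun t => (dist (pt b t) (pt a α) + dist (pt b t) (pt c γ)) + dist (pt c γ) (pt a α) := by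
      funext t
      simp only [triPerim]
      rw [dist_comm (pt a α) (pt b t)]
    rw [hfun] at hcrit2
    have hu := hcrit2.unique htot
    rw [dist_comm (pt b β) (pt a α)] at hu
    linarith [hu]
  -- the common signed-distance ratio s
  set s : ℝ := a*b*Real.sin (β-α)/d1 with hsdef
  have e3 : a*b*Real.sin (β-α) = s*d1 := by
    rw [hsdef]; field_simp
  have e1 : b*c*Real.sin (γ-β) = s*d2 := by
    rw [hsdef]
    have hflip : Real.sin (γ-β) = -Real.sin (β-γ) := by
      rw [show γ-β = -(β-γ) by ring, Real.sin_neg]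
    field_simp at hE2
    rw [div_mul_eq_mul_div, eq_div_iff hd1ne]
    linear_combination (-1:ℝ)*hE2 + (b*c*d1)*hflip
  have e2 : c*a*Real.sin (α-γ) = s*d3 := by
    rw [hsdef]
    have hflip : Real.sin (β-α) = -Real.sin (α-β) := by
      rw [show β-α = -(α-β) by ring, Real.sin_neg]
    field_simp at hE1
    rw [div_mul_eq_mul_div, eq_div_iff hd1ne]
    linear_combination hE1 + (-(a*b*d3))*hflip
  -- Pythagorean relations
  have hpy1 : (s*d1)^2 + (a*b*Real.cos (β-α))^2 = a^2*b^2 := by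
    have ht := Real.sin_sq_add_cos_sq (β-α)
    linear_combination a^2*b^2*ht - (a*b*Real.sin (β-α) + s*d1)*e3
  have hpy2 : (s*d2)^2 + (b*c*Real.cos (γ-β))^2 = b^2*c^2 := by
    have ht := Real.sin_sq_add_cos_sq (γ-β)
    linear_combination b^2*c^2*ht - (b*c*Real.sin (γ-β) + s*d2)*e1
  have hpy3 : (s*d3)^2 + (c*a*Real.cos (α-γ))^2 = c^2*a^2 := by
    have ht := Real.sin_sq_add_cos_sq (α-γ)
    linear_combination c^2*a^2*ht - (c*a*Real.sin (α-γ) + s*d3)*e2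
  -- squared chord lengths
  have hd1sq : d1^2 = a^2 + b^2 - 2*(a*b*Real.cos (β-α)) := by
    have harg : (0:ℝ) ≤ a^2+b^2-2*a*b*Real.cos (α-β) := by
      nlinarith [Real.cos_le_one (α-β), sq_nonneg (a-b), mul_pos ha hb]
    rw [hd1def, dist_pt, Real.sq_sqrt harg, show α-β = -(β-α) by ring, Real.cos_neg]
    ring
  have hd2sq : d2^2 = b^2 + c^2 - 2*(b*c*Real.cos (γ-β)) := by
    have harg : (0:ℝ) ≤ b^2+c^2-2*b*c*Real.cos (β-γ) := by
      nlinarith [Real.cos_le_one (β-γ), sq_nonneg (b-c), mul_pos hb hc]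
    rw [hd2def, dist_pt, Real.sq_sqrt harg, show β-γ = -(γ-β) by ring, Real.cos_neg]
    ring
  have hd3sq : d3^2 = c^2 + a^2 - 2*(c*a*Real.cos (α-γ)) := by
    have harg : (0:ℝ) ≤ c^2+a^2-2*c*a*Real.cos (γ-α) := by
      nlinarith [Real.cos_le_one (γ-α), sq_nonneg (c-a), mul_pos hc ha]
    rw [hd3def, dist_pt, Real.sq_sqrt harg, show γ-α = -(α-γ) by ring, Real.cos_neg]
    ring
  -- s is nonzero since O is interior
  have hs_ne : s ≠ 0 := by
    intro hs0
    rw [hs0, zero_mul] at e1 e2 e3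
    have hsin12 : Real.sin (β-α) = 0 := by
      have h : Real.sin (β-α) = (a*b*Real.sin (β-α))/(a*b) := by field_simp
      rw [h, e3, zero_div]
    apply not_mem_interior_hull (pt a α) (pt b β) (pt c γ) (pt a α) ?_ 0 ?_ ?_ ?_ hO
    · rintro ⟨h0, h1⟩
      rw [pt_apply0] at h0
      rw [pt_apply1] at h1
      have hcos : Real.cos α = 0 := by
        have : Real.cos α = (a * Real.cos α)/a := by field_simp
        rw [this, h0, zero_div]
      have hsin : Real.sin α = 0 := by
        have : Real.sin α = (a * Real.sin α)/a := by field_simp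
        rw [this, h1, zero_div]
      nlinarith [Real.sin_sq_add_cos_sq α]
    · ring
    · rw [cross_pt]
      rw [show α - β = -(β-α) by ring, Real.sin_neg, hsin12]
      ring
    · rw [cross_pt]
      linarith [e2]
  have hs2pos : 0 < s^2 := by
    rcases lt_or_gt_of_ne hs_ne with h|h <;> nlinarith
  -- r: the common distance, with the three infDist equalities
  set r : ℝ := |s| with hrdef
  have hr12 : Metric.infDist (0:E2) (affineSpan ℝ {pt a α, pt b β} : Set E2) = r := by
    rw [infDist_line _ _ hne12, cross_pt, e3, hrdef, abs_mul, abs_of_pos hd1pos,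
      mul_div_assoc, div_self hd1ne, mul_one]
  have hr23 : Metric.infDist (0:E2) (affineSpan ℝ {pt b β, pt c γ} : Set E2) = r := by
    rw [infDist_line _ _ hne23, cross_pt, e1, hrdef, abs_mul, abs_of_pos hd2pos,
      mul_div_assoc, div_self hd2ne, mul_one]
  have hr31 : Metric.infDist (0:E2) (affineSpan ℝ {pt c γ, pt a α} : Set E2) = r := by
    rw [infDist_line _ _ hne31, cross_pt, e2, hrdef, abs_mul, abs_of_pos hd3pos,
      mul_div_assoc, div_self hd3ne, mul_one]
  -- bounds : s^2 ≤ a^2, b^2, c^2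
  have hr_le_a : r ≤ a := by
    have hmem : pt a α ∈ (affineSpan ℝ {pt a α, pt b β} : Set E2) :=
      mem_affineSpan ℝ (Set.mem_insert _ _)
    have h := Metric.infDist_le_dist_of_mem (x := (0:E2)) hmem
    rw [hr12, dist_comm, dist_zero_right, norm_pt a α ha.le] at h
    exact h
  have hr_le_b : r ≤ b := by
    have hmem : pt b β ∈ (affineSpan ℝ {pt b β, pt c γ} : Set E2) :=
      mem_affineSpan ℝ (Set.mem_insert _ _)
    have h := Metric.infDist_le_dist_of_mem (x := (0:E2)) hmem
    rw [hr23, dist_comm, dist_zero_right, norm_pt b β hb.le] at h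
    exact h
  have hr_le_c : r ≤ c := by
    have hmem : pt c γ ∈ (affineSpan ℝ {pt c γ, pt a α} : Set E2) :=
      mem_affineSpan ℝ (Set.mem_insert _ _)
    have h := Metric.infDist_le_dist_of_mem (x := (0:E2)) hmem
    rw [hr31, dist_comm, dist_zero_right, norm_pt c γ hc.le] at h
    exact h
  have hr0 : 0 ≤ r := abs_nonneg s
  have hr2 : r^2 = s^2 := sq_abs s
  have hs2a : s^2 ≤ a^2 := by
    rw [← hr2]; exact pow_le_pow_left₀ hr0 hr_le_a 2
  have hs2b : s^2 ≤ b^2 := by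
    rw [← hr2]; exact pow_le_pow_left₀ hr0 hr_le_b 2
  have hs2c : s^2 ≤ c^2 := by
    rw [← hr2]; exact pow_le_pow_left₀ hr0 hr_le_c 2
  -- tangent lengths
  set u : ℝ := Real.sqrt (a^2 - s^2) with hudef
  set v : ℝ := Real.sqrt (b^2 - s^2) with hvdef
  set w : ℝ := Real.sqrt (c^2 - s^2) with hwdef
  have hu0 : 0 ≤ u := Real.sqrt_nonneg _
  have hv0 : 0 ≤ v := Real.sqrt_nonneg _
  have hw0 : 0 ≤ w := Real.sqrt_nonneg _
  have hu2 : u^2 = a^2 - s^2 := Real.sq_sqrt (by linarith)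
  have hv2 : v^2 = b^2 - s^2 := Real.sq_sqrt (by linarith)
  have hw2 : w^2 = c^2 - s^2 := Real.sq_sqrt (by linarith)
  -- the case dichotomies for each side
  have hc1 := side_cases u v s d1 (a*b*Real.cos (β-α)) hu0 hv0 hd1pos
    (by linear_combination hpy1 - s^2*hd1sq - v^2*hu2 - (a^2-s^2)*hv2)
    (by linear_combination hd1sq - hu2 - hv2)
  have hc2 := side_cases v w s d2 (b*c*Real.cos (γ-β)) hv0 hw0 hd2pos
    (by linear_combination hpy2 - s^2*hd2sq - w^2*hv2 - (b^2-s^2)*hw2)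
    (by linear_combination hd2sq - hv2 - hw2)
  have hc3 := side_cases w u s d3 (c*a*Real.cos (α-γ)) hw0 hu0 hd3pos
    (by linear_combination hpy3 - s^2*hd3sq - u^2*hw2 - (c^2-s^2)*hu2)
    (by linear_combination hd3sq - hw2 - hu2)
  -- closure identities
  have hsinA : Real.sin (α-γ) = -(Real.sin (β-α) * Real.cos (γ-β) + Real.cos (β-α) * Real.sin (γ-β)) := by
    rw [show α-γ = -((β-α) + (γ-β)) by ring, Real.sin_neg, Real.sin_add]
  have hsinB : Real.sin (β-α) = -(Real.sin (γ-β) * Real.cos (α-γ) + Real.cos (γ-β) * Real.sin (α-γ)) := by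
    rw [show β-α = -((γ-β) + (α-γ)) by ring, Real.sin_neg, Real.sin_add]
  have hsinC : Real.sin (γ-β) = -(Real.sin (α-γ) * Real.cos (β-α) + Real.cos (α-γ) * Real.sin (β-α)) := by
    rw [show γ-β = -((α-γ) + (β-α)) by ring, Real.sin_neg, Real.sin_add]
  have hA : (v^2+s^2)*d3 + d1*(b*c*Real.cos (γ-β)) + d2*(a*b*Real.cos (β-α)) = 0 := by
    have h0 : s*(b^2*d3 + d1*(b*c*Real.cos (γ-β)) + d2*(a*b*Real.cos (β-α))) = 0 := by
      linear_combination (-(b^2))*e2 + (-(b*c*Real.cos (γ-β)))*e3 + (-(a*b*Real.cos (β-α)))*e1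
        + (a*b^2*c)*hsinA
    have h1 := (mul_eq_zero.1 h0).resolve_left hs_ne
    linear_combination h1 + d3*hv2
  have hB : (w^2+s^2)*d1 + d2*(c*a*Real.cos (α-γ)) + d3*(b*c*Real.cos (γ-β)) = 0 := by
    have h0 : s*(c^2*d1 + d2*(c*a*Real.cos (α-γ)) + d3*(b*c*Real.cos (γ-β))) = 0 := by
      linear_combination (-(c^2))*e3 + (-(c*a*Real.cos (α-γ)))*e1 + (-(b*c*Real.cos (γ-β)))*e2
        + (a*b*c^2)*hsinB
    have h1 := (mul_eq_zero.1 h0).resolve_left hs_ne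
    linear_combination h1 + d1*hw2
  have hC : (u^2+s^2)*d2 + d3*(a*b*Real.cos (β-α)) + d1*(c*a*Real.cos (α-γ)) = 0 := by
    have h0 : s*(a^2*d2 + d3*(a*b*Real.cos (β-α)) + d1*(c*a*Real.cos (α-γ))) = 0 := by
      linear_combination (-(a^2))*e1 + (-(a*b*Real.cos (β-α)))*e2 + (-(c*a*Real.cos (α-γ)))*e3
        + (a^2*b*c)*hsinC
    have h1 := (mul_eq_zero.1 h0).resolve_left hs_ne
    linear_combination h1 + d2*hu2
  -- Heron relation
  obtain ⟨hH, hD1, hD2, hD3⟩ := heron_eq u v w s d1 d2 d3 _ _ _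
    hu0 hv0 hw0 hd1pos hd2pos hd3pos hs2pos hc1 hc2 hc3 hA hB hC
  refine ⟨r, hr12, hr23, hr31, ?_⟩
  have hrpos : 0 < r := by
    rcases eq_or_lt_of_le hr0 with h|h
    · exact absurd (abs_eq_zero.1 h.symm) hs_ne
    · exact h
  have hHr : u*v*w = r^2*(u+v+w) := by linear_combination hH - (u+v+w)*hr2
  have hA2 : a^2 = u^2 + r^2 := by linear_combination -hu2 - hr2
  have hB2 : b^2 = v^2 + r^2 := by linear_combination -hv2 - hr2
  have hC2 : c^2 = w^2 + r^2 := by linear_combination -hw2 - hr2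
  exact final_cubic a b c u v w r d1 d2 d3 ha hb hc hrpos hu0 hv0 hw0
    hd1pos hd2pos hd3pos hD1 hD2 hD3 hA2 hB2 hC2 hHr
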